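/- Let Φ : ℝⁿ × ℝᵐ → ℝ be differentiable with x ↦ Φ(x,y) being μ_x-strongly convex for every y (μ_x > 0), and ∇_x Φ Lipschitz in y with constant L_{xy} > 0. Fix ε ∈ (0, 1/L_{xy}) and define h : ℝⁿ × ℝᵐ → ℝᵐ × ℝⁿ by h(x,y) = (y, ε ∇_x Φ(x,y)). Then for all (x,y), (x̄,ȳ): ‖h(x,y) − h(x̄,ȳ)‖² ≥ (ε² μ_x² / 2)‖x − x̄‖² + (1 − ε² L_{xy}²)‖y − ȳ‖². In particular, with C_ε = √(min{ε²μ_x²/2, 1 − ε²L_{xy}²}) > 0, h is an expansive map: ‖h(x,y) − h(x̄,ȳ)‖ ≥ C_ε ‖(x,y) − (x̄,ȳ)‖. -/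

import Mathlib

open RealInnerProductSpace

/-- First-order condition for strongly convex differentiable functions. -/
lemma strong_first_order {E : Type*} [NormedAddCommGroup E] [InnerProductSpace ℝ E]
    [CompleteSpace E] {f : E → ℝ} {μ : ℝ} (hsc : StrongConvexOn Set.univ μ f)
    {u g : E} (hg : HasGradientAt f g u) (v : E) :
    f u + ⟪g, v - u⟫ + μ / 2 * ‖v - u‖ ^ 2 ≤ f v := by
  set c : ℝ := μ / 2 * ‖v - u‖ ^ 2 with hc
  set ψ : ℝ → ℝ := fun t => f (u + t • (v - u)) - c * t ^ 2 with hψ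
  have hψconv : ConvexOn ℝ Set.univ ψ := by
    refine ⟨convex_univ, fun p _ q _ a b ha hb hab => ?_⟩
    obtain rfl : b = 1 - a := by linarith
    have key := hsc.2 (Set.mem_univ (u + p • (v - u))) (Set.mem_univ (u + q • (v - u))) ha hb hab
    have hpt : a • (u + p • (v - u)) + (1 - a) • (u + q • (v - u))
        = u + (a • p + (1 - a) • q) • (v - u) := by
      simp only [smul_eq_mul]; module
    rw [hpt] at key
    have hnorm : ‖(u + p • (v - u)) - (u + q • (v - u))‖ = |p - q| * ‖v - u‖ := by
      rw [show (u + p • (v - u)) - (u + q • (v - u)) = (p - q) • (v - u) by module]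
      rw [norm_smul, Real.norm_eq_abs]
    rw [hnorm] at key
    simp only [smul_eq_mul] at key ⊢
    simp only [hψ]
    have habs : |p - q| ^ 2 = (p - q) ^ 2 := sq_abs _
    have hexp : (|p - q| * ‖v - u‖) ^ 2 = (p - q) ^ 2 * ‖v - u‖ ^ 2 := by
      rw [mul_pow, habs]
    rw [hexp] at key
    have heq : a * (f (u + p • (v - u)) - c * p ^ 2)
        + (1 - a) * (f (u + q • (v - u)) - c * q ^ 2)
        = a * f (u + p • (v - u)) + (1 - a) * f (u + q • (v - u))
          - a * (1 - a) * (μ / 2 * ((p - q) ^ 2 * ‖v - u‖ ^ 2))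
          - c * (a * p + (1 - a) * q) ^ 2 := by
      rw [hc]; ring
    rw [heq]
    linarith [key]
  have hL0 : HasDerivAt (fun t : ℝ => u + t • (v - u)) (v - u) 0 := by
    have := ((hasDerivAt_id (0 : ℝ)).smul_const (v - u)).const_add u
    simpa using this
  have hFu : HasFDerivAt f (InnerProductSpace.toDual ℝ E g) (u + (0:ℝ) • (v - u)) := by
    simpa using hasGradientAt_iff_hasFDerivAt.mp hg
  have hcomp : HasDerivAt (fun t : ℝ => f (u + t • (v - u))) ⟪g, v - u⟫ 0 := by
    have := hFu.comp_hasDerivAt 0 hL0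
    simp only [Function.comp_def, InnerProductSpace.toDual_apply_apply] at this
    exact this
  have hq : HasDerivAt (fun t : ℝ => c * t ^ 2) 0 0 := by
    have := (hasDerivAt_pow 2 (0:ℝ)).const_mul c
    simpa using this
  have hψd : HasDerivAt ψ ⟪g, v - u⟫ 0 := by
    have h := hcomp.sub hq
    rw [sub_zero] at h
    exact h
  have hslope := hψconv.le_slope_of_hasDerivAt (Set.mem_univ (0:ℝ)) (Set.mem_univ (1:ℝ))
    one_pos hψd
  rw [slope_def_field] at hslope
  simp only [hψ, zero_smul, add_zero, one_smul] at hslope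
  have h1 : u + (v - u) = v := by abel
  rw [h1] at hslope
  norm_num at hslope
  linarith

/-- Gradient lower bound from strong convexity. -/
lemma strong_grad_lower {E : Type*} [NormedAddCommGroup E] [InnerProductSpace ℝ E]
    [CompleteSpace E] {f : E → ℝ} {μ : ℝ} (hsc : StrongConvexOn Set.univ μ f)
    {u v gu gv : E} (hgu : HasGradientAt f gu u) (hgv : HasGradientAt f gv v) :
    μ * ‖v - u‖ ≤ ‖gv - gu‖ := by
  have h1 := strong_first_order hsc hgu v
  have h2 := strong_first_order hsc hgv u
  have huv : ‖u - v‖ = ‖v - u‖ := norm_sub_rev _ _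
  rw [huv] at h2
  have hinner : μ * ‖v - u‖ ^ 2 ≤ ⟪gv - gu, v - u⟫ := by
    have hneg : ⟪gv, u - v⟫ = -⟪gv, v - u⟫ := by
      rw [show u - v = -(v - u) by abel, inner_neg_right]
    rw [hneg] at h2
    rw [inner_sub_left]
    linarith
  rcases eq_or_ne v u with h | h
  · simp [h]
  · have hpos : 0 < ‖v - u‖ := by
      rw [norm_pos_iff]; exact sub_ne_zero.mpr h
    have hcs : ⟪gv - gu, v - u⟫ ≤ ‖gv - gu‖ * ‖v - u‖ := real_inner_le_norm _ _
    have hm : μ * ‖v - u‖ * ‖v - u‖ ≤ ‖gv - gu‖ * ‖v - u‖ := by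
      nlinarith [hinner, hcs]
    exact le_of_mul_le_mul_right hm hpos

/-- For `ε ∈ (0, 1/Lxy)`, the map `h(x,y) = (y, ε ∇ₓΦ(x,y))` satisfies
`‖h(x,y) − h(x̄,ȳ)‖² ≥ (ε²μx²/2)‖x−x̄‖² + (1−ε²Lxy²)‖y−ȳ‖²`, and hence is expansive with
constant `C_ε = √(min{ε²μx²/2, 1−ε²Lxy²})`.  Here the product norm satisfies
`‖(x,y)‖² = ‖x‖² + ‖y‖²`, so the claims are stated componentwise. -/
theorem implicit_map_expansive {n m : ℕ}
    (μx Lxy ε : ℝ) (hμx : 0 < μx) (hLxy : 0 < Lxy) (hε0 : 0 < ε) (hε1 : ε < 1 / Lxy)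
    (Φ : EuclideanSpace ℝ (Fin n) → EuclideanSpace ℝ (Fin m) → ℝ)
    (Gx : EuclideanSpace ℝ (Fin n) → EuclideanSpace ℝ (Fin m) → EuclideanSpace ℝ (Fin n))
    (hGx : ∀ x y, HasGradientAt (fun x' => Φ x' y) (Gx x y) x)
    (hsc : ∀ y, StrongConvexOn Set.univ μx (fun x => Φ x y))
    (hlip : ∀ x y ybar, ‖Gx x y - Gx x ybar‖ ≤ Lxy * ‖y - ybar‖) :
    (∀ x xbar : EuclideanSpace ℝ (Fin n), ∀ y ybar : EuclideanSpace ℝ (Fin m),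
      ε ^ 2 * μx ^ 2 / 2 * ‖x - xbar‖ ^ 2 + (1 - ε ^ 2 * Lxy ^ 2) * ‖y - ybar‖ ^ 2
        ≤ ‖y - ybar‖ ^ 2 + ‖ε • Gx x y - ε • Gx xbar ybar‖ ^ 2) ∧
    (0 < Real.sqrt (min (ε ^ 2 * μx ^ 2 / 2) (1 - ε ^ 2 * Lxy ^ 2))) ∧
    (∀ x xbar : EuclideanSpace ℝ (Fin n), ∀ y ybar : EuclideanSpace ℝ (Fin m),
      Real.sqrt (min (ε ^ 2 * μx ^ 2 / 2) (1 - ε ^ 2 * Lxy ^ 2)) *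
          Real.sqrt (‖x - xbar‖ ^ 2 + ‖y - ybar‖ ^ 2)
        ≤ Real.sqrt (‖y - ybar‖ ^ 2 + ‖ε • Gx x y - ε • Gx xbar ybar‖ ^ 2)) := by
  -- the small constant is positive
  have hεL : ε * Lxy < 1 := (lt_div_iff₀ hLxy).mp hε1
  have hmin : 0 < min (ε ^ 2 * μx ^ 2 / 2) (1 - ε ^ 2 * Lxy ^ 2) := by
    refine lt_min (by positivity) ?_
    nlinarith [mul_pos hε0 hLxy]
  -- the key componentwise bound
  have part1 : ∀ x xbar : EuclideanSpace ℝ (Fin n), ∀ y ybar : EuclideanSpace ℝ (Fin m),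
      ε ^ 2 * μx ^ 2 / 2 * ‖x - xbar‖ ^ 2 + (1 - ε ^ 2 * Lxy ^ 2) * ‖y - ybar‖ ^ 2
        ≤ ‖y - ybar‖ ^ 2 + ‖ε • Gx x y - ε • Gx xbar ybar‖ ^ 2 := by
    intro x xbar y ybar
    set a := ‖x - xbar‖ with hadef
    set b := ‖y - ybar‖ with hbdef
    have ha : 0 ≤ a := norm_nonneg _
    have hb : 0 ≤ b := norm_nonneg _
    -- lower bound on the gradient difference
    have hkey : μx * a - Lxy * b ≤ ‖Gx x y - Gx xbar ybar‖ := by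
      have h1 : μx * a ≤ ‖Gx x y - Gx xbar y‖ := strong_grad_lower (hsc y) (hGx xbar y) (hGx x y)
      have h2 : ‖Gx xbar y - Gx xbar ybar‖ ≤ Lxy * b := hlip xbar y ybar
      have htri : ‖Gx x y - Gx xbar y‖
          ≤ ‖Gx x y - Gx xbar ybar‖ + ‖Gx xbar ybar - Gx xbar y‖ := norm_sub_le_norm_sub_add_norm_sub _ _ _
      rw [norm_sub_rev (Gx xbar ybar) (Gx xbar y)] at htri
      linarith
    set r := ‖ε • Gx x y - ε • Gx xbar ybar‖ with hrdef
    have hr0 : 0 ≤ r := norm_nonneg _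
    have hr : ε * μx * a - ε * Lxy * b ≤ r := by
      have : r = ε * ‖Gx x y - Gx xbar ybar‖ := by
        rw [hrdef, ← smul_sub, norm_smul, Real.norm_eq_abs, abs_of_pos hε0]
      rw [this]
      have hmul := mul_le_mul_of_nonneg_left hkey hε0.le
      have hring : ε * (μx * a - Lxy * b) = ε * μx * a - ε * Lxy * b := by ring
      linarith [hmul, hring]
    set A := ε * μx * a with hA
    set B := ε * Lxy * b with hB
    have hA0 : 0 ≤ A := by positivity
    have hB0 : 0 ≤ B := by positivity
    have hmain : A ^ 2 / 2 - B ^ 2 ≤ r ^ 2 := by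
      rcases le_or_gt A B with hAB | hAB
      · nlinarith [sq_nonneg r]
      · have h1 : A - B ≤ r := by linarith
        nlinarith [sq_nonneg (A - 2 * B), sq_nonneg (r - (A - B))]
    have hgoal : ε ^ 2 * μx ^ 2 / 2 * a ^ 2 - ε ^ 2 * Lxy ^ 2 * b ^ 2 ≤ r ^ 2 := by
      have hA2 : A ^ 2 = ε ^ 2 * μx ^ 2 * a ^ 2 := by rw [hA]; ring
      have hB2 : B ^ 2 = ε ^ 2 * Lxy ^ 2 * b ^ 2 := by rw [hB]; ring
      linarith [hmain, hA2, hB2]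
    have hexp2 : (1 - ε ^ 2 * Lxy ^ 2) * b ^ 2 = b ^ 2 - ε ^ 2 * Lxy ^ 2 * b ^ 2 := by ring
    linarith [hgoal, hexp2]
  refine ⟨part1, Real.sqrt_pos.mpr hmin, ?_⟩
  intro x xbar y ybar
  set M := min (ε ^ 2 * μx ^ 2 / 2) (1 - ε ^ 2 * Lxy ^ 2) with hM
  have hM0 : 0 ≤ M := hmin.le
  rw [← Real.sqrt_mul hM0]
  apply Real.sqrt_le_sqrt
  have h1 : M * (‖x - xbar‖ ^ 2 + ‖y - ybar‖ ^ 2)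
      ≤ ε ^ 2 * μx ^ 2 / 2 * ‖x - xbar‖ ^ 2 + (1 - ε ^ 2 * Lxy ^ 2) * ‖y - ybar‖ ^ 2 := by
    have ha := sq_nonneg ‖x - xbar‖
    have hb := sq_nonneg ‖y - ybar‖
    have h2 := mul_le_mul_of_nonneg_right (min_le_left (ε ^ 2 * μx ^ 2 / 2) (1 - ε ^ 2 * Lxy ^ 2)) ha
    have h3 := mul_le_mul_of_nonneg_right (min_le_right (ε ^ 2 * μx ^ 2 / 2) (1 - ε ^ 2 * Lxy ^ 2)) hb
    have hring : M * (‖x - xbar‖ ^ 2 + ‖y - ybar‖ ^ 2)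
        = M * ‖x - xbar‖ ^ 2 + M * ‖y - ybar‖ ^ 2 := by ring
    linarith [h2, h3, hring]
  exact h1.trans (part1 x xbar y ybar)
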